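/- Let $d$ be a positive integer and $S_1^{(d)}$ the $T$-space of $k_0\langle X\rangle$ generated by $S^{(d)}(x_1,\ldots,x_d)$. Then for every $u \in S_1^{(d)}$ and every $v \in k_0\langle X\rangle$, the commutator $[u,v] = uv - vu$ belongs to $S_1^{(d)}$. -/

import Mathlib

open scoped BigOperators

/-- The free non-unital associative algebra over `k` on countably many variables,
realized as the semigroup algebra of the free semigroup on `ℕ`. -/
abbrev FA (k : Type*) [Field k] := MonoidAlgebra k (FreeSemigroup ℕ)

/-- The generator (variable) `x_i`. -/
noncomputable def Xg (k : Type*) [Field k] (i : ℕ) : FA k :=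
  MonoidAlgebra.single (FreeSemigroup.of i) 1

/-- Product of a (nonempty) list in a non-unital semiring; `0` on the empty list. -/
def lprod {A : Type*} [NonUnitalSemiring A] : List A → A
  | [] => 0
  | [a] => a
  | a :: b :: l => a * lprod (b :: l)

/-- `n`-th power in a non-unital semiring (zero for `n = 0`). -/
def npow' {A : Type*} [NonUnitalSemiring A] (a : A) (n : ℕ) : A :=
  lprod (List.replicate n a)

/-- The full multilinear symmetrization `S^{(d)}(y_1,…,y_d) = ∑_{σ ∈ Σ_d} y_{σ(1)} ⋯ y_{σ(d)}`. -/
def Ssym {A : Type*} [NonUnitalSemiring A] (d : ℕ) (y : Fin d → A) : A :=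
  ∑ σ : Equiv.Perm (Fin d), lprod (List.ofFn (fun i => y (σ i)))

/-- A T-space: a subspace closed under all substitution endomorphisms
(non-unital algebra endomorphisms). -/
def IsTSpace (k : Type*) [Field k] (V : Submodule k (FA k)) : Prop :=
  ∀ (φ : FA k →ₙₐ[k] FA k), ∀ v ∈ V, φ v ∈ V

/-- The T-space generated by a set `S`: the span of all substitution instances
of elements of `S`. -/
noncomputable def TSpan (k : Type*) [Field k] (S : Set (FA k)) : Submodule k (FA k) :=
  Submodule.span k {a | ∃ (φ : FA k →ₙₐ[k] FA k) (s : FA k), s ∈ S ∧ a = φ s}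

/-- The set of products `u * v` with `u ∈ U`, `v ∈ V`. -/
def mulSet {k : Type*} [Field k] (U V : Submodule k (FA k)) : Set (FA k) :=
  {a | ∃ u ∈ U, ∃ v ∈ V, a = u * v}

/-- The T-spaces `S_n^{(d)}`: `S_1^{(d)}` is generated by `S^{(d)}(x_1,…,x_d)` and
`S_{n+1}^{(d)} = (S_n^{(d)} S_1^{(d)})^S`. -/
noncomputable def Sn (k : Type*) [Field k] (d : ℕ) : ℕ → Submodule k (FA k)
  | 0 => ⊥
  | 1 => TSpan k {Ssym d (fun i => Xg k i)}
  | (n+2) => TSpan k (mulSet (Sn k d (n+1)) (Sn k d 1))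

/-- The T-spaces `H_n`: `H_1` is generated by `x_1^p` and `H_{n+1} = (H_n H_1)^S`. -/
noncomputable def Hn (k : Type*) [Field k] (p : ℕ) : ℕ → Submodule k (FA k)
  | 0 => ⊥
  | 1 => TSpan k {npow' (Xg k 0) p}
  | (n+2) => TSpan k (mulSet (Hn k p (n+1)) (Hn k p 1))

/-- The word `x_1^p x_2^p ⋯ x_n^p`. -/
noncomputable def hword (k : Type*) [Field k] (p n : ℕ) : FA k :=
  lprod ((List.range n).map (fun t => npow' (Xg k t) p))

section Aux

variable {k : Type*} [Field k]

lemma lprod_cons {A : Type*} [NonUnitalSemiring A] (a : A) {l : List A} (hl : l ≠ []) :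
    lprod (a :: l) = a * lprod l := by
  cases l with
  | nil => exact absurd rfl hl
  | cons b t => rfl

lemma hom_lprod (φ : FA k →ₙₐ[k] FA k) : ∀ l : List (FA k),
    φ (lprod l) = lprod (l.map φ)
  | [] => by simp [lprod]
  | [a] => by simp [lprod]
  | a :: b :: l => by
    show φ (a * lprod (b :: l)) = lprod (φ a :: (b :: l).map φ)
    rw [map_mul, hom_lprod φ (b :: l), lprod_cons _ (by simp)]

lemma hom_Ssym (φ : FA k →ₙₐ[k] FA k) (d : ℕ) (y : Fin d → FA k) :
    φ (Ssym d y) = Ssym d (fun i => φ (y i)) := by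
  unfold Ssym
  rw [map_sum]
  refine Finset.sum_congr rfl fun σ _ => ?_
  rw [hom_lprod, List.map_ofFn]
  rfl

/-- Any full substitution instance of `Ssym` lies in `Sn k d 1`. -/
lemma Ssym_mem (d : ℕ) (a : Fin d → FA k) : Ssym d a ∈ Sn k d 1 := by
  classical
  set a' : ℕ → FA k := fun n => if h : n < d then a ⟨n, h⟩ else 0 with ha'
  let φ : FA k →ₙₐ[k] FA k :=
    MonoidAlgebra.liftMagma k (FreeSemigroup.lift a')
  have hφX : ∀ i : Fin d, φ (Xg k i) = a i := by
    intro i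
    show (MonoidAlgebra.liftMagma k (FreeSemigroup.lift a'))
      (MonoidAlgebra.single (FreeSemigroup.of (i : ℕ)) 1) = a i
    rw [MonoidAlgebra.liftMagma_apply_apply]
    simp [ha', i.isLt]
  have key : Ssym d a = φ (Ssym d (fun i : Fin d => Xg k i)) := by
    rw [hom_Ssym]
    congr 1
    funext i
    exact (hφX i).symm
  show Ssym d a ∈ Sn k d 1
  rw [Sn, TSpan, key]
  exact Submodule.subset_span ⟨φ, Ssym d (fun i : Fin d => Xg k i), rfl, rfl⟩

lemma D_lprod (D : FA k →ₗ[k] FA k)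
    (hD : ∀ a b : FA k, D (a * b) = a * D b + D a * b) :
    ∀ l : List (FA k), D (lprod l) = ∑ i : Fin l.length, lprod (l.set i (D (l.get i)))
  | [] => by simp [lprod]
  | [a] => by simp [lprod]
  | a :: b :: l => by
    have hne : ∀ (c : FA k) (i : ℕ), (b :: l).set i c ≠ [] := by
      intro c i
      have : ((b :: l).set i c).length = (b :: l).length := List.length_set ..
      intro h
      rw [h] at this
      simp at this
    rw [show lprod (a :: b :: l) = a * lprod (b :: l) from rfl, hD]
    rw [D_lprod D hD (b :: l)]
    rw [Finset.mul_sum]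
    have hR : (∑ i : Fin (a :: b :: l).length,
          lprod ((a :: b :: l).set i (D ((a :: b :: l).get i))))
        = ∑ i : Fin ((b :: l).length + 1),
          lprod ((a :: b :: l).set i (D ((a :: b :: l).get i))) := rfl
    rw [hR, Fin.sum_univ_succ]
    have h0 : lprod ((a :: b :: l).set ((0 : Fin ((b::l).length+1)) : ℕ)
          (D ((a :: b :: l).get (0 : Fin ((b::l).length+1)))))
        = D a * lprod (b :: l) := by
      show lprod (D a :: b :: l) = D a * lprod (b :: l)
      rfl
    rw [h0, add_comm]
    congr 1
    refine Finset.sum_congr rfl fun i _ => ?_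
    have hset : (a :: b :: l).set ((i.succ : Fin ((b::l).length+1)) : ℕ)
          (D ((a :: b :: l).get i.succ))
        = a :: ((b :: l).set i (D ((b :: l).get i))) := rfl
    rw [hset, lprod_cons _ (hne _ _)]

lemma ofFn_set' {α : Type*} : ∀ {n : ℕ} (f : Fin n → α) (i : Fin n) (c : α),
    (List.ofFn f).set (i : ℕ) c = List.ofFn (Function.update f i c)
  | 0, _, i, _ => i.elim0
  | n+1, f, i, c => by
    classical
    induction i using Fin.cases with
    | zero =>
      simp only [List.ofFn_succ, List.set, Fin.val_zero, Function.update_self]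
      congr 1
    | succ j =>
      simp only [List.ofFn_succ, List.set, Fin.val_succ,
        Function.update_of_ne (Fin.succ_ne_zero j).symm]
      congr 1
      rw [ofFn_set' (fun t => f t.succ) j c]
      apply congrArg
      funext t
      by_cases h : t = j
      · subst h; simp
      · rw [Function.update_of_ne h, Function.update_of_ne]
        exact fun hc => h (Fin.succ_injective _ hc)

lemma D_lprod_ofFn (D : FA k →ₗ[k] FA k)
    (hD : ∀ a b : FA k, D (a * b) = a * D b + D a * b)
    {n : ℕ} (f : Fin n → FA k) :
    D (lprod (List.ofFn f)) =
      ∑ i : Fin n, lprod (List.ofFn (Function.update f i (D (f i)))) := by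
  classical
  rw [D_lprod D hD]
  have hlen : (List.ofFn f).length = n := List.length_ofFn
  refine Fintype.sum_equiv (finCongr hlen)
    (fun i => lprod ((List.ofFn f).set i (D ((List.ofFn f).get i))))
    (fun i => lprod (List.ofFn (Function.update f i (D (f i))))) (fun i => ?_)
  congr 1
  rw [List.get_ofFn]
  have h1 : ((i : Fin (List.ofFn f).length) : ℕ)
      = ((Fin.cast (by simp) i : Fin n) : ℕ) := rfl
  rw [h1, ofFn_set']
  apply congrArg
  have h2 : (Fin.cast (by simp : (List.ofFn f).length = n) i) = finCongr hlen i := rfl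
  rw [h2]

lemma D_Ssym (D : FA k →ₗ[k] FA k)
    (hD : ∀ a b : FA k, D (a * b) = a * D b + D a * b)
    (d : ℕ) (y : Fin d → FA k) :
    D (Ssym d y) = ∑ t : Fin d, Ssym d (Function.update y t (D (y t))) := by
  classical
  unfold Ssym
  rw [map_sum]
  have step : ∀ σ : Equiv.Perm (Fin d),
      D (lprod (List.ofFn fun i => y (σ i))) =
      ∑ t : Fin d, lprod (List.ofFn fun i => (Function.update y t (D (y t))) (σ i)) := by
    intro σ
    rw [D_lprod_ofFn D hD]
    refine Fintype.sum_bijective σ σ.bijective _ _ (fun i => ?_)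
    congr 1
    apply congrArg
    funext j
    rw [Function.update_apply_equiv_apply y σ (σ i) (D (y (σ i))) j]
    show Function.update (fun t => y (σ t)) i (D (y (σ i))) j
        = Function.update (y ∘ σ) (σ.symm (σ i)) (D (y (σ i))) j
    rw [Equiv.symm_apply_apply]
    rfl
  rw [Finset.sum_congr rfl fun σ _ => step σ]
  rw [Finset.sum_comm]

end Aux

/-- The T-space `S_1^{(d)}` is closed under commutators with arbitrary elements. -/
theorem S1_closed_under_commutator (k : Type*) [Field k] (d : ℕ) (hd : 1 ≤ d) :
    ∀ u ∈ Sn k d 1, ∀ v : FA k, u * v - v * u ∈ Sn k d 1 := by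
  classical
  intro u hu v
  set D : FA k →ₗ[k] FA k := LinearMap.mulRight k v - LinearMap.mulLeft k v with hDdef
  have hDapp : ∀ a : FA k, D a = a * v - v * a := by
    intro a; simp [hDdef, LinearMap.mulRight_apply, LinearMap.mulLeft_apply]
  have hD : ∀ a b : FA k, D (a * b) = a * D b + D a * b := by
    intro a b
    simp only [hDapp]
    rw [mul_sub, sub_mul]
    rw [mul_assoc, mul_assoc, mul_assoc]
    abel
  rw [← hDapp]
  rw [Sn, TSpan] at hu
  refine Submodule.span_induction ?_ ?_ ?_ ?_ hu
  · rintro x ⟨φ, s, hs, rfl⟩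
    rw [Set.mem_singleton_iff] at hs
    subst hs
    rw [hom_Ssym, D_Ssym D hD]
    exact Submodule.sum_mem _ fun t _ => Ssym_mem d _
  · simp
  · intro x y _ _ hx hy
    rw [map_add]
    exact Submodule.add_mem _ hx hy
  · intro c x _ hx
    rw [map_smul]
    exact Submodule.smul_mem _ c hx
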